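/- Let A be a convex subset of ℝ closed under countable convex combinations and J : Hom(A, ℝ∞) → ℝ∞ a weakly averaging, order-preserving, countably affine functional on the countably affine maps A → ℝ∞ such that J(m) ∈ Image(m) for every m. Then there exists a unique a ∈ A such that J(m) = m(a) for every countably affine m : A → ℝ∞ (i.e., J = ev_a). -/

import Mathlib

open Filter

/-- `ℝ∞ = ℝ ∪ {∞}`, the one point extension of the real line. -/
abbrev Rinf : Type := WithTop ℝ

/-- A countable partition of one: a sequence in `[0,1]` summing to `1`. -/
def IsPartition (α : ℕ → ℝ) : Prop := (∀ i, α i ∈ Set.Icc (0 : ℝ) 1) ∧ HasSum α 1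

open Classical in
/-- The countable convex combination `∑ α_i u_i` on `ℝ∞`: the limit of the partial sums
`∑_{i<N} α_i u_i` when every `u i` with nonzero coefficient is real and this limit exists
in `ℝ`, and `∞` otherwise (terms with zero coefficient are ignored, i.e. `0·∞ = 0`). -/
noncomputable def scomb (α : ℕ → ℝ) (u : ℕ → Rinf) : Rinf :=
  if h : (∀ i, α i ≠ 0 → u i ≠ ⊤) ∧
      ∃ L : ℝ, Tendsto (fun N => ∑ i ∈ Finset.range N, α i * (u i).untopD 0) atTop (nhds L)
  then ((h.2.choose : ℝ) : Rinf) else ⊤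

/-- A super convex space: a set with countable convex combinations satisfying the
projection and associativity axioms. -/
structure SuperConvexSpace (A : Type*) where
  comb : (ℕ → ℝ) → (ℕ → A) → A
  proj : ∀ (j : ℕ) (u : ℕ → A), comb (fun i => if i = j then 1 else 0) u = u j
  assoc : ∀ (α : ℕ → ℝ) (β : ℕ → ℕ → ℝ) (u : ℕ → A), IsPartition α →
    (∀ i, IsPartition (β i)) →
    comb α (fun i => comb (β i) u) = comb (fun j => ∑' i, α i * β i j) u

/-- A map `m : A → ℝ∞` is countably affine if it preserves all countable convex
combinations. -/
def CountablyAffine {A : Type*} (S : SuperConvexSpace A) (m : A → Rinf) : Prop :=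
  ∀ (α : ℕ → ℝ), IsPartition α → ∀ u : ℕ → A,
    m (S.comb α u) = scomb α (fun i => m (u i))

/-- A countably affine endomap of `ℝ∞`. -/
def AffEndo (g : Rinf → Rinf) : Prop :=
  ∀ (α : ℕ → ℝ), IsPartition α → ∀ u : ℕ → Rinf, g (scomb α u) = scomb α (fun i => g (u i))

lemma scomb_eq_coe {α : ℕ → ℝ} {u : ℕ → Rinf} (hu : ∀ i, α i ≠ 0 → u i ≠ ⊤) {L : ℝ}
    (hL : Tendsto (fun N => ∑ i ∈ Finset.range N, α i * (u i).untopD 0) atTop (nhds L)) :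
    scomb α u = (L : Rinf) := by
  classical
  have h : (∀ i, α i ≠ 0 → u i ≠ ⊤) ∧
      ∃ L : ℝ, Tendsto (fun N => ∑ i ∈ Finset.range N, α i * (u i).untopD 0) atTop (nhds L) :=
    ⟨hu, L, hL⟩
  rw [scomb, dif_pos h]
  exact congrArg _ (tendsto_nhds_unique h.2.choose_spec hL)

lemma scomb_eq_top_of_top {α : ℕ → ℝ} {u : ℕ → Rinf} (h : ∃ i, α i ≠ 0 ∧ u i = ⊤) :
    scomb α u = ⊤ := by
  rw [scomb, dif_neg]
  rintro ⟨h1, -⟩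
  obtain ⟨i, hi, hti⟩ := h
  exact h1 i hi hti

lemma scomb_eq_top_of_div {α : ℕ → ℝ} {u : ℕ → Rinf}
    (h : ¬ ∃ L : ℝ, Tendsto (fun N => ∑ i ∈ Finset.range N, α i * (u i).untopD 0) atTop (nhds L)) :
    scomb α u = ⊤ := by
  rw [scomb, dif_neg]
  rintro ⟨-, h2⟩
  exact h h2

noncomputable def bin (t : ℝ) : ℕ → ℝ := fun i => if i = 0 then t else if i = 1 then 1 - t else 0

lemma hasSum_two (P Q : ℝ) :
    HasSum (fun i : ℕ => if i = 0 then P else if i = 1 then Q else 0) (P + Q) := by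
  have h := (hasSum_ite_eq (0 : ℕ) P).add (hasSum_ite_eq (1 : ℕ) Q)
  convert h using 2 with i
  rcases i with _ | _ | i <;> simp

lemma bin_partition {t : ℝ} (h0 : 0 ≤ t) (h1 : t ≤ 1) : IsPartition (bin t) := by
  constructor
  · intro i
    rcases i with _ | _ | i <;> simp [bin] <;> constructor <;> linarith
  · have := hasSum_two t (1 - t)
    show HasSum (fun i : ℕ => if i = 0 then t else if i = 1 then 1 - t else 0) 1
    simpa using this

lemma scomb_bin {t x0 x1 : ℝ} {u : ℕ → Rinf} (h0 : u 0 = (x0 : ℝ)) (h1 : u 1 = (x1 : ℝ)) :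
    scomb (bin t) u = ((t * x0 + (1 - t) * x1 : ℝ) : Rinf) := by
  apply scomb_eq_coe
  · intro i hi
    rcases i with _ | _ | i
    · simp [h0]
    · simp [h1]
    · simp [bin] at hi
  · apply tendsto_atTop_of_eventually_const (i₀ := 2)
    intro N hN
    have : ∀ i ∈ Finset.range N, bin t i * (u i).untopD 0
        = if i = 0 then t * x0 else if i = 1 then (1 - t) * x1 else 0 := by
      intro i _
      rcases i with _ | _ | i <;> simp [bin, h0, h1]
    rw [Finset.sum_congr rfl this,
      ← Finset.sum_subset (Finset.range_subset_range.mpr hN) (by rintro (_ | _ | i) _ hi <;> simp_all)]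
    simp [Finset.sum_range_succ]

lemma scomb_const {α : ℕ → ℝ} (hα : IsPartition α) (w : ℝ) :
    scomb α (fun _ => ((w : ℝ) : Rinf)) = (w : Rinf) := by
  apply scomb_eq_coe (fun i _ => WithTop.coe_ne_top)
  have h := hα.2.tendsto_sum_nat.mul_const w
  simp only [one_mul] at h
  convert h using 2 with N
  simp [Finset.sum_mul]

lemma tsum_bin (t x0 x1 : ℝ) (u : ℕ → ℝ) (h0 : u 0 = x0) (h1 : u 1 = x1) :
    ∑' i, bin t i * u i = t * x0 + (1 - t) * x1 := by
  have h : (fun i => bin t i * u i)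
      = fun i => if i = 0 then t * x0 else if i = 1 then (1 - t) * x1 else 0 := by
    funext i
    rcases i with _ | _ | i <;> simp [bin, h0, h1]
  rw [h]
  exact (hasSum_two _ _).tsum_eq

lemma aff_ca (A : Set ℝ)
    (hclosed : ∀ (α : ℕ → ℝ), IsPartition α → ∀ u : ℕ → ℝ, (∀ i, u i ∈ A) →
      Summable (fun i => α i * u i) ∧ (∑' i, α i * u i) ∈ A)
    (S : SuperConvexSpace ↥A)
    (hS : ∀ (α : ℕ → ℝ), IsPartition α → ∀ u : ℕ → ↥A,
      ((S.comb α u : ℝ)) = ∑' i, α i * (u i : ℝ))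
    (c d : ℝ) :
    CountablyAffine S (fun x => ((c * (x : ℝ) + d : ℝ) : Rinf)) := by
  intro α hα u
  have hu : ∀ i, ((u i : ℝ)) ∈ A := fun i => (u i).2
  have hsum := (hclosed α hα (fun i => (u i : ℝ)) hu).1
  have key : scomb α (fun i => ((c * (u i : ℝ) + d : ℝ) : Rinf))
      = ((c * (∑' i, α i * (u i : ℝ)) + d : ℝ) : Rinf) := by
    apply scomb_eq_coe (fun i _ => WithTop.coe_ne_top)
    have h1 : Tendsto (fun N => ∑ i ∈ Finset.range N, α i * (u i : ℝ)) atTop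
        (nhds (∑' i, α i * (u i : ℝ))) := hsum.hasSum.tendsto_sum_nat
    have h2 : Tendsto (fun N => ∑ i ∈ Finset.range N, α i) atTop (nhds 1) :=
      hα.2.tendsto_sum_nat
    have h3 := (h1.const_mul c).add (h2.mul_const d)
    rw [one_mul] at h3
    convert h3 using 2 with N
    rw [Finset.mul_sum, Finset.sum_mul, ← Finset.sum_add_distrib]
    apply Finset.sum_congr rfl
    intro i _
    simp only [WithTop.untopD_coe]
    ring
  simp only []
  rw [key, hS α hα u]

def affm (A : Set ℝ) (c d : ℝ) : ↥A → Rinf := fun x => ((c * (x : ℝ) + d : ℝ) : Rinf)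

@[simp] lemma affm_apply (A : Set ℝ) (c d : ℝ) (x : ↥A) :
    affm A c d x = ((c * (x : ℝ) + d : ℝ) : Rinf) := rfl

lemma eval_aff (A : Set ℝ)
    (hclosed : ∀ (α : ℕ → ℝ), IsPartition α → ∀ u : ℕ → ℝ, (∀ i, u i ∈ A) →
      Summable (fun i => α i * u i) ∧ (∑' i, α i * u i) ∈ A)
    (S : SuperConvexSpace ↥A)
    (hS : ∀ (α : ℕ → ℝ), IsPartition α → ∀ u : ℕ → ↥A,
      ((S.comb α u : ℝ)) = ∑' i, α i * (u i : ℝ))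
    (J : (↥A → Rinf) → Rinf)
    (hJavg : ∀ w : Rinf, J (fun _ => w) = w)
    (hJcomb : ∀ (α : ℕ → ℝ), IsPartition α → ∀ m : ℕ → ↥A → Rinf,
      (∀ i, CountablyAffine S (m i)) →
      J (fun a => scomb α (fun i => m i a)) = scomb α (fun i => J (m i)))
    (hJim : ∀ m : ↥A → Rinf, CountablyAffine S m → J m ∈ Set.range m)
    (a : ↥A) (hJι : J (affm A 1 0) = ((a : ℝ) : Rinf)) :
    ∀ c d : ℝ, J (affm A c d) = ((c * (a : ℝ) + d : ℝ) : Rinf) := by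
  have hca : ∀ c d, CountablyAffine S (affm A c d) := fun c d => aff_ca A hclosed S hS c d
  have hneg : ∀ c d : ℝ, c < 0 → J (affm A c d) = ((c * (a : ℝ) + d : ℝ) : Rinf) := by
    intro c d hc
    set t : ℝ := 1 / (1 - c) with htdef
    have hc1 : (0 : ℝ) < 1 - c := by linarith
    have ht0 : 0 < t := by rw [htdef]; positivity
    have ht1 : t ≤ 1 := by
      rw [htdef, div_le_one hc1]
      linarith
    have ht : t * c + (1 - t) = 0 := by
      rw [htdef]
      field_simp
      ring
    set m : ℕ → ↥A → Rinf :=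
      fun i => if i = 0 then affm A c d else if i = 1 then affm A 1 0 else affm A 0 0 with hmdef
    have hm0 : m 0 = affm A c d := by rw [hmdef]; norm_num
    have hm1 : m 1 = affm A 1 0 := by rw [hmdef]; norm_num
    have hm2 : ∀ i, m (i + 2) = affm A 0 0 := by
      intro i; rw [hmdef]; norm_num
      exact fun h => absurd h (by omega)
    have hm : ∀ i, CountablyAffine S (m i) := by
      rintro (_ | _ | i)
      · rw [hm0]; apply hca
      · rw [hm1]; apply hca
      · rw [hm2]; apply hca
    have hcombJ := hJcomb (bin t) (bin_partition ht0.le ht1) m hm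
    obtain ⟨b, hb⟩ := hJim (affm A c d) (hca c d)
    have hpt : (fun x : ↥A => scomb (bin t) (fun i => m i x)) = fun _ => ((t * d : ℝ) : Rinf) := by
      funext x
      have e0 : (fun i => m i x) 0 = ((c * (x : ℝ) + d : ℝ) : Rinf) := by
        show m 0 x = _; rw [hm0]; rfl
      have e1 : (fun i => m i x) 1 = ((1 * (x : ℝ) + 0 : ℝ) : Rinf) := by
        show m 1 x = _; rw [hm1]; rfl
      rw [scomb_bin e0 e1]
      norm_cast
      linear_combination (x : ℝ) * ht
    have e0' : (fun i => J (m i)) 0 = ((c * (b : ℝ) + d : ℝ) : Rinf) := by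
      show J (m 0) = _
      rw [hm0, ← hb]
      rfl
    have e1' : (fun i => J (m i)) 1 = ((1 * (a : ℝ) + 0 : ℝ) : Rinf) := by
      show J (m 1) = _
      rw [hm1, hJι]
      norm_num
    rw [hpt, hJavg, scomb_bin e0' e1'] at hcombJ
    have hre : t * d = t * (c * (b : ℝ) + d) + (1 - t) * (1 * (a : ℝ) + 0) := by
      exact_mod_cast hcombJ
    have hba : t * c * ((b : ℝ) - (a : ℝ)) = 0 := by linear_combination -hre - (a : ℝ) * ht
    have hba' : (b : ℝ) = (a : ℝ) := by
      have htc : t * c ≠ 0 := mul_ne_zero ht0.ne' (by linarith)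
      have := (mul_eq_zero.mp hba).resolve_left htc
      linarith
    rw [← hb]
    simp [hba']
  intro c d
  rcases lt_trichotomy c 0 with hc | hc | hc
  · exact hneg c d hc
  · subst hc
    have : affm A 0 d = fun _ => ((d : ℝ) : Rinf) := by funext x; simp
    rw [this, hJavg]
    norm_num
  · set m : ℕ → ↥A → Rinf :=
      fun i => if i = 0 then affm A c d else if i = 1 then affm A (-c) 0 else affm A 0 0 with hmdef
    have hm0 : m 0 = affm A c d := by rw [hmdef]; norm_num
    have hm1 : m 1 = affm A (-c) 0 := by rw [hmdef]; norm_num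
    have hm2 : ∀ i, m (i + 2) = affm A 0 0 := by
      intro i; rw [hmdef]; norm_num
      exact fun h => absurd h (by omega)
    have hm : ∀ i, CountablyAffine S (m i) := by
      rintro (_ | _ | i)
      · rw [hm0]; apply hca
      · rw [hm1]; apply hca
      · rw [hm2]; apply hca
    have hcombJ := hJcomb (bin (1/2)) (bin_partition (by norm_num) (by norm_num)) m hm
    obtain ⟨b, hb⟩ := hJim (affm A c d) (hca c d)
    have hpt : (fun x : ↥A => scomb (bin (1/2)) (fun i => m i x))
        = fun _ => ((d / 2 : ℝ) : Rinf) := by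
      funext x
      have e0 : (fun i => m i x) 0 = ((c * (x : ℝ) + d : ℝ) : Rinf) := by
        show m 0 x = _; rw [hm0]; rfl
      have e1 : (fun i => m i x) 1 = ((-c * (x : ℝ) + 0 : ℝ) : Rinf) := by
        show m 1 x = _; rw [hm1]; rfl
      rw [scomb_bin e0 e1]
      norm_cast
      ring
    have e0' : (fun i => J (m i)) 0 = ((c * (b : ℝ) + d : ℝ) : Rinf) := by
      show J (m 0) = _
      rw [hm0, ← hb]
      rfl
    have e1' : (fun i => J (m i)) 1 = ((-c * (a : ℝ) + 0 : ℝ) : Rinf) := by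
      show J (m 1) = _
      rw [hm1, hneg (-c) 0 (by linarith)]
    rw [hpt, hJavg, scomb_bin e0' e1'] at hcombJ
    have hre : d / 2 = 1/2 * (c * (b : ℝ) + d) + (1 - 1/2) * (-c * (a : ℝ) + 0) := by
      exact_mod_cast hcombJ
    have hba' : (b : ℝ) = (a : ℝ) := by
      have h2 : c * ((b : ℝ) - (a : ℝ)) = 0 := by linarith
      have := (mul_eq_zero.mp h2).resolve_left hc.ne'
      linarith
    rw [← hb]
    simp [hba']

section Geo

variable (A : Set ℝ) (S : SuperConvexSpace ↥A)
  (hS : ∀ (α : ℕ → ℝ), IsPartition α → ∀ u : ℕ → ↥A,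
      ((S.comb α u : ℝ)) = ∑' i, α i * (u i : ℝ))
  (m : ↥A → Rinf) (hm : CountablyAffine S m)

include hS hm

lemma aff_two {t : ℝ} (h0 : 0 ≤ t) (h1 : t ≤ 1) {x y z : ↥A}
    (hz : (z : ℝ) = t * (x : ℝ) + (1 - t) * (y : ℝ)) {fx fy : ℝ}
    (hx : m x = (fx : ℝ)) (hy : m y = (fy : ℝ)) :
    m z = ((t * fx + (1 - t) * fy : ℝ) : Rinf) := by
  have hzc : z = S.comb (bin t) (fun i => if i = 0 then x else y) := by
    apply Subtype.ext
    rw [hz, hS _ (bin_partition h0 h1)]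
    rw [tsum_bin t (x : ℝ) (y : ℝ) _ (by norm_num) (by norm_num)]
  rw [hzc, hm (bin t) (bin_partition h0 h1)]
  exact scomb_bin (by simpa using hx) (by simpa using hy)

lemma top_left {t : ℝ} (h0 : 0 ≤ t) (h1 : t ≤ 1) (ht : t ≠ 0) {x y z : ↥A}
    (hz : (z : ℝ) = t * (x : ℝ) + (1 - t) * (y : ℝ)) (hx : m x = ⊤) :
    m z = ⊤ := by
  have hzc : z = S.comb (bin t) (fun i => if i = 0 then x else y) := by
    apply Subtype.ext
    rw [hz, hS _ (bin_partition h0 h1)]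
    rw [tsum_bin t (x : ℝ) (y : ℝ) _ (by norm_num) (by norm_num)]
  rw [hzc, hm (bin t) (bin_partition h0 h1)]
  apply scomb_eq_top_of_top
  exact ⟨0, by simpa [bin] using ht, by simpa using hx⟩

lemma aff_interp {x y z : ↥A} {t : ℝ}
    (hz : (z : ℝ) = t * (x : ℝ) + (1 - t) * (y : ℝ)) {fx fy : ℝ}
    (hx : m x = (fx : ℝ)) (hy : m y = (fy : ℝ)) :
    m z = ((t * fx + (1 - t) * fy : ℝ) : Rinf) := by
  rcases le_or_gt t 0 with ht | ht
  rotate_left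
  · rcases le_or_gt t 1 with ht1 | ht1
    · exact aff_two A S hS m hm ht.le ht1 hz hx hy
    · -- t > 1 : x is between z and y,  x = (1/t) z + (1-1/t) y
      have htne : t ≠ 0 := by linarith
      have hxz : (x : ℝ) = (1/t) * (z : ℝ) + (1 - 1/t) * (y : ℝ) := by
        field_simp
        linear_combination -hz
      have hs0 : (0:ℝ) ≤ 1/t := by positivity
      have hs1 : 1/t ≤ 1 := by rw [div_le_one (by linarith)]; linarith
      obtain ⟨fz, hfz⟩ : ∃ fz : ℝ, m z = (fz : ℝ) := by
        cases hmz : m z with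
        | none =>
          exfalso
          have := top_left A S hS m hm hs0 hs1 (by positivity) hxz hmz
          rw [hx] at this
          exact (WithTop.coe_ne_top this)
        | some fz => exact ⟨fz, rfl⟩
      have := aff_two A S hS m hm hs0 hs1 hxz hfz hy
      rw [hx] at this
      have hre : fx = 1/t * fz + (1 - 1/t) * fy := by exact_mod_cast this
      rw [hfz]
      congr 1
      field_simp at hre
      linear_combination -hre
  · rcases eq_or_lt_of_le ht with ht0 | ht0
    · subst ht0
      have hzy : z = y := Subtype.ext (by rw [hz]; ring)
      rw [hzy, hy]
      norm_num
    · -- t < 0 : y is between z and x,  y = r z + (1-r) x with r = 1/(1-t)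
      set r : ℝ := 1/(1-t) with hrdef
      have h1t : (0:ℝ) < 1 - t := by linarith
      have hr0 : 0 < r := by rw [hrdef]; positivity
      have hr1 : r ≤ 1 := by rw [hrdef, div_le_one h1t]; linarith
      have hyz : (y : ℝ) = r * (z : ℝ) + (1 - r) * (x : ℝ) := by
        rw [hrdef]
        field_simp
        linear_combination -hz
      obtain ⟨fz, hfz⟩ : ∃ fz : ℝ, m z = (fz : ℝ) := by
        cases hmz : m z with
        | none =>
          exfalso
          have := top_left A S hS m hm hr0.le hr1 hr0.ne' hyz hmz
          rw [hy] at this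
          exact (WithTop.coe_ne_top this)
        | some fz => exact ⟨fz, rfl⟩
      have := aff_two A S hS m hm hr0.le hr1 hyz hfz hx
      rw [hy] at this
      have hre : fy = r * fz + (1 - r) * fx := by exact_mod_cast this
      rw [hfz]
      congr 1
      rw [hrdef] at hre
      field_simp at hre
      linarith [hre]

end Geo

noncomputable def geo : ℕ → ℝ := fun i => 1 / 2 / 2 ^ i

lemma geo_partition : IsPartition geo := by
  constructor
  · intro i
    simp only [geo, Set.mem_Icc]
    constructor
    · positivity
    · rw [div_le_one (by positivity)]
      have : (1:ℝ) ≤ 2 ^ i := one_le_pow₀ (by norm_num)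
      linarith
  · exact hasSum_geometric_two' 1

lemma scomb_geo (x e me : ℝ) :
    scomb geo (fun i => ((4 ^ i * x + (me - 4 ^ i * e) : ℝ) : Rinf))
      = if x = e then ((me : ℝ) : Rinf) else ⊤ := by
  split_ifs with hxe
  · subst hxe
    have : (fun i : ℕ => ((4 ^ i * x + (me - 4 ^ i * x) : ℝ) : Rinf))
        = fun _ => ((me : ℝ) : Rinf) := by
      funext i
      norm_num
    rw [this]
    exact scomb_const geo_partition me
  · apply scomb_eq_top_of_div
    rintro ⟨L, hL⟩
    have hdiff : Tendsto (fun N =>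
        (∑ i ∈ Finset.range (N + 1), geo i *
          (((4 ^ i * x + (me - 4 ^ i * e) : ℝ) : Rinf)).untopD 0)
        - ∑ i ∈ Finset.range N, geo i *
          (((4 ^ i * x + (me - 4 ^ i * e) : ℝ) : Rinf)).untopD 0) atTop (nhds 0) := by
      have h1 := (hL.comp (tendsto_add_atTop_nat 1)).sub hL
      simpa using h1
    have hterm : ∀ N : ℕ,
        (∑ i ∈ Finset.range (N + 1), geo i *
          (((4 ^ i * x + (me - 4 ^ i * e) : ℝ) : Rinf)).untopD 0)
        - (∑ i ∈ Finset.range N, geo i *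
          (((4 ^ i * x + (me - 4 ^ i * e) : ℝ) : Rinf)).untopD 0)
        = 2 ^ N * (x - e) / 2 + me / (2 * 2 ^ N) := by
      intro N
      rw [Finset.sum_range_succ]
      have h2 : (2:ℝ) ^ N ≠ 0 := by positivity
      have h4 : (4:ℝ) ^ N = 2 ^ N * 2 ^ N := by
        rw [show (4:ℝ) = 2 * 2 by norm_num, mul_pow]
      simp only [WithTop.untopD_coe, geo]
      rw [h4]
      field_simp
      ring
    rw [funext hterm] at hdiff
    obtain ⟨N0, hN0⟩ := Metric.tendsto_atTop.mp hdiff 1 one_pos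
    have hxe' : 0 < |x - e| := abs_pos.mpr (sub_ne_zero.mpr hxe)
    obtain ⟨K, hK⟩ := pow_unbounded_of_one_lt (2 * (1 + |me|) / |x - e|) (by norm_num : (1:ℝ) < 2)
    set N := max N0 K with hNdef
    have h2N : (2:ℝ) ^ K ≤ 2 ^ N := by
      apply pow_le_pow_right₀ (by norm_num)
      exact le_max_right _ _
    have hbig : 2 ^ N * |x - e| / 2 > 1 + |me| := by
      rw [div_lt_iff₀ hxe'] at hK
      nlinarith
    have hsmall : |me / (2 * 2 ^ N)| ≤ |me| := by
      rw [abs_div]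
      apply div_le_self (abs_nonneg me)
      rw [abs_of_pos (by positivity : (0:ℝ) < 2 * 2 ^ N)]
      have : (1:ℝ) ≤ 2 ^ N := one_le_pow₀ (by norm_num)
      linarith
    have habs : |2 ^ N * (x - e) / 2| = 2 ^ N * |x - e| / 2 := by
      rw [abs_div, abs_mul, abs_of_pos (by positivity : (0:ℝ) < (2:ℝ)^N)]
      norm_num
    have hlow := abs_sub_abs_le_abs_sub (2 ^ N * (x - e) / 2) (-(me / (2 * 2 ^ N)))
    have hclose := hN0 N (le_max_left _ _)
    rw [Real.dist_eq, sub_zero] at hclose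
    have : |2 ^ N * (x - e) / 2 - -(me / (2 * 2 ^ N))|
        = |2 ^ N * (x - e) / 2 + me / (2 * 2 ^ N)| := by rw [sub_neg_eq_add]
    rw [this, abs_neg, habs] at hlow
    linarith

/-- Codensity (fullness of the truncated Yoneda embedding) for super convex subspaces of
`ℝ`: every weakly averaging, order-preserving, countably affine functional `J` on the
countably affine maps `A → ℝ∞` with `J(m) ∈ Image(m)` for every `m` is evaluation at a
unique point of `A`. -/
theorem stmt_15 (A : Set ℝ) (hconv : Convex ℝ A)
    (hclosed : ∀ (α : ℕ → ℝ), IsPartition α → ∀ u : ℕ → ℝ, (∀ i, u i ∈ A) →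
      Summable (fun i => α i * u i) ∧ (∑' i, α i * u i) ∈ A)
    (S : SuperConvexSpace ↥A)
    (hS : ∀ (α : ℕ → ℝ), IsPartition α → ∀ u : ℕ → ↥A,
      ((S.comb α u : ℝ)) = ∑' i, α i * (u i : ℝ))
    (J : (↥A → Rinf) → Rinf)
    (hJavg : ∀ w : Rinf, J (fun _ => w) = w)
    (hJmono : ∀ m₁ m₂ : ↥A → Rinf, CountablyAffine S m₁ → CountablyAffine S m₂ →
      (∀ a, m₁ a ≤ m₂ a) → J m₁ ≤ J m₂)
    (hJcomb : ∀ (α : ℕ → ℝ), IsPartition α → ∀ m : ℕ → ↥A → Rinf,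
      (∀ i, CountablyAffine S (m i)) →
      J (fun a => scomb α (fun i => m i a)) = scomb α (fun i => J (m i)))
    (hJim : ∀ m : ↥A → Rinf, CountablyAffine S m → J m ∈ Set.range m) :
    ∃! a : ↥A, ∀ m : ↥A → Rinf, CountablyAffine S m → J m = m a := by

  have hca : ∀ c d, CountablyAffine S (affm A c d) := fun c d => aff_ca A hclosed S hS c d
  obtain ⟨a, ha⟩ := hJim (affm A 1 0) (hca 1 0)
  have hJι : J (affm A 1 0) = ((a : ℝ) : Rinf) := by rw [← ha]; simp
  have hEval := eval_aff A hclosed S hS J hJavg hJcomb hJim a hJι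
  refine ⟨a, ?_, ?_⟩
  · intro m hm
    by_cases htop : ∀ x, m x = ⊤
    · obtain ⟨b, hb⟩ := hJim m hm
      rw [← hb, htop b, htop a]
    · push_neg at htop
      obtain ⟨e, he⟩ := htop
      obtain ⟨fe, hfe⟩ := WithTop.ne_top_iff_exists.mp he
      by_cases hfin : ∀ x, m x ≠ ⊤
      · -- m is everywhere finite, hence affine
        obtain ⟨b, hb⟩ := hJim m hm
        by_cases hba : b = a
        · rw [← hb, hba]
        · have hba' : (b : ℝ) ≠ (a : ℝ) := fun h => hba (Subtype.ext h)
          obtain ⟨fa, hfa⟩ := WithTop.ne_top_iff_exists.mp (hfin a)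
          obtain ⟨fb, hfb⟩ := WithTop.ne_top_iff_exists.mp (hfin b)
          have hsub : (b : ℝ) - (a : ℝ) ≠ 0 := sub_ne_zero.mpr hba'
          set c : ℝ := (fb - fa) / ((b : ℝ) - (a : ℝ)) with hcdef
          set d : ℝ := fa - c * (a : ℝ) with hddef
          have hrep : ∀ x : ↥A, m x = ((c * (x : ℝ) + d : ℝ) : Rinf) := by
            intro x
            set t : ℝ := ((x : ℝ) - (a : ℝ)) / ((b : ℝ) - (a : ℝ)) with htdef
            have hx : (x : ℝ) = t * (b : ℝ) + (1 - t) * (a : ℝ) := by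
              rw [htdef]
              field_simp
              ring
            rw [aff_interp A S hS m hm hx hfb.symm hfa.symm]
            congr 1
            have hts : t * ((b : ℝ) - (a : ℝ)) = (x : ℝ) - (a : ℝ) :=
              div_mul_cancel₀ _ hsub
            have hcs : c * ((b : ℝ) - (a : ℝ)) = fb - fa :=
              div_mul_cancel₀ _ hsub
            rw [hddef]
            linear_combination c * hts - t * hcs
          have hmaff : m = affm A c d := funext hrep
          rw [hmaff, hEval c d]
          rfl
      · -- m is ⊤ away from e
        push_neg at hfin
        obtain ⟨z, hz⟩ := hfin
        have hsing : ∀ x : ↥A, x ≠ e → m x = ⊤ := by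
          intro x hxe
          by_contra hmx
          obtain ⟨fx, hfx⟩ := WithTop.ne_top_iff_exists.mp hmx
          have hex : (e : ℝ) - (x : ℝ) ≠ 0 :=
            sub_ne_zero.mpr (fun h => hxe (Subtype.ext h.symm))
          set t : ℝ := ((z : ℝ) - (x : ℝ)) / ((e : ℝ) - (x : ℝ)) with htdef
          have hzc : (z : ℝ) = t * (e : ℝ) + (1 - t) * (x : ℝ) := by
            rw [htdef]
            field_simp
            ring
          have := aff_interp A S hS m hm hzc hfe.symm hfx.symm
          rw [hz] at this
          exact WithTop.top_ne_coe this
        -- m is represented as a geometric scomb of affine maps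
        set k : ℕ → ↥A → Rinf := fun i => affm A (4 ^ i) (fe - 4 ^ i * (e : ℝ)) with hkdef
        have hk : ∀ i, CountablyAffine S (k i) := by
          intro i
          rw [hkdef]
          apply hca
        have hpt : ∀ x : ↥A, scomb geo (fun i => k i x) = m x := by
          intro x
          have hfun : (fun i => k i x)
              = fun i => ((4 ^ i * (x : ℝ) + (fe - 4 ^ i * (e : ℝ)) : ℝ) : Rinf) := by
            funext i
            rw [hkdef]
            rfl
          rw [hfun, scomb_geo]
          by_cases hx : (x : ℝ) = (e : ℝ)
          · rw [if_pos hx, show x = e from Subtype.ext hx, ← hfe]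
          · rw [if_neg hx, hsing x (fun h => hx (by rw [h]))]
        have hcombJ := hJcomb geo geo_partition k hk
        rw [show (fun x : ↥A => scomb geo (fun i => k i x)) = m from funext hpt] at hcombJ
        have hJk : (fun i => J (k i)) = fun i => k i a := by
          funext i
          have : k i = affm A (4 ^ i) (fe - 4 ^ i * (e : ℝ)) := by rw [hkdef]
          rw [this, hEval]
          rfl
        rw [hJk, hpt a] at hcombJ
        exact hcombJ
  · intro y hy
    have h1 := hy (affm A 1 0) (hca 1 0)
    rw [hJι] at h1
    have : ((a : ℝ) : Rinf) = ((1 * (y : ℝ) + 0 : ℝ) : Rinf) := h1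
    have h2 : (a : ℝ) = 1 * (y : ℝ) + 0 := by exact_mod_cast this
    apply Subtype.ext
    rw [h2]
    ring
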